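/- Fix c > 0 and 𝛍 ∈ ℂ with Im 𝛍 = ϑ·2 where ϑ ∈ [0, π/2), and set r = coth(c/2). The Möbius transformation U = T_𝛍 ∘ J, where J = [[0, −coth(c/2)], [tanh(c/2), 0]] and T_𝛍 = [[cosh(𝛍/2), −sinh(𝛍/2)·coth(c/2)], [−sinh(𝛍/2)·tanh(c/2), cosh(𝛍/2)]], maps the hypercycle circle {z ∈ ℂ : |z + i·r·tan ϑ| = r·sec ϑ} onto itself. -/

import Mathlib

open Complex Real

noncomputable def cothR (x : ℝ) : ℝ := Real.cosh x / Real.sinh x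

noncomputable def cothC (z : ℂ) : ℂ := Complex.cosh z / Complex.sinh z

noncomputable def mobius (A : Matrix (Fin 2) (Fin 2) ℂ) (z : ℂ) : ℂ :=
  (A 0 0 * z + A 0 1) / (A 1 0 * z + A 1 1)

noncomputable def Jmat (c : ℝ) : Matrix (Fin 2) (Fin 2) ℂ :=
  !![0, -cothC (c / 2); Complex.tanh (c / 2), 0]

noncomputable def Tmat (c : ℝ) (m : ℂ) : Matrix (Fin 2) (Fin 2) ℂ :=
  !![Complex.cosh (m / 2), -Complex.sinh (m / 2) * cothC (c / 2);
     -Complex.sinh (m / 2) * Complex.tanh (c / 2), Complex.cosh (m / 2)]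

/-- Core algebraic identity for the hypercycle invariance. -/
private lemma core_identity (A B Ab Bb r t s co z zb : ℂ)
    (hrt : r * t = 1)
    (h1 : A * Ab - B * Bb = 1 - 2 * s ^ 2)
    (h2 : B * Ab - A * Bb = 2 * s * co * I)
    (hsc : s ^ 2 = 1 - co ^ 2) :
    co * (-(B * z + r * A) * -(Bb * zb + r * Ab))
      + I * r * s * (-(Bb * zb + r * Ab) * (t * A * z + B)
          - -(B * z + r * A) * (t * Ab * zb + Bb))
      - co * r ^ 2 * ((t * A * z + B) * (t * Ab * zb + Bb))
      = -(co * (z * zb) + I * r * s * (zb - z) - co * r ^ 2) := by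
  linear_combination
    (r^2*co + zb*r^2*t*s*I - z*r^2*t*s*I - z*zb*r^2*t^2*co) * h1
    + (-(r^2*s*I) - zb*r^2*t*co + z*r*co + z*zb*r*t*s*I) * h2
    + (zb*r*s*I - 2*zb*r*s*co^2*I - 2*zb*r*s^3*I + zb*B*Bb*r*s*I - zb*A*Bb*r*co
        - z*r*s*I + 2*z*r*s^3*I - z*B*Bb*r*s*I - z*A*Bb*r*co + z*zb*co - 2*z*zb*co^3
        + 2*z*zb*s^2*co*I^2 - z*zb*r*t*co + 2*z*zb*r*t*s^2*co - z*zb*B*Bb*co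
        - z*zb*B*Bb*r*t*co) * hrt
    + (-2*r^2*s^2*co + 2*z*zb*s^2*co) * Complex.I_sq
    + (-2*zb*r*s*I + 2*z*r*s*I - 2*z*zb*co + 2*z*zb*r*t*co) * hsc

theorem stmt8 (c : ℝ) (hc : 0 < c) (ϑ : ℝ) (hϑ : ϑ ∈ Set.Ico 0 (Real.pi / 2))
    (m : ℂ) (hm : m.im = 2 * ϑ) :
    (fun z => mobius (Tmat c m * Jmat c) z) ''
        {z : ℂ | ‖z + Complex.I * (cothR (c / 2) * Real.tan ϑ)‖ =
          cothR (c / 2) / Real.cos ϑ} =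
      {z : ℂ | ‖z + Complex.I * (cothR (c / 2) * Real.tan ϑ)‖ =
        cothR (c / 2) / Real.cos ϑ} := by
  obtain ⟨hϑ0, hϑ1⟩ := hϑ
  have hco : 0 < Real.cos ϑ :=
    Real.cos_pos_of_mem_Ioo ⟨by linarith [Real.pi_pos], hϑ1⟩
  set s : ℝ := Real.sin ϑ with hs_def
  set co : ℝ := Real.cos ϑ with hco_def
  have hsh : 0 < Real.sinh (c / 2) := Real.sinh_pos_iff.2 (by linarith)
  have hch : 0 < Real.cosh (c / 2) := Real.cosh_pos (c / 2)
  set r : ℝ := cothR (c / 2) with hr_def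
  set t : ℝ := Real.tanh (c / 2) with ht_def
  have hr0 : 0 < r := div_pos hch hsh
  have hrt : r * t = 1 := by
    rw [hr_def, ht_def, cothR, Real.tanh_eq_sinh_div_cosh]
    field_simp
  have hrtC : (r : ℂ) * (t : ℂ) = 1 := by exact_mod_cast congrArg (Complex.ofReal) hrt
  have hcoC : (co : ℂ) ≠ 0 := by exact_mod_cast hco.ne'
  set A : ℂ := Complex.cosh (m / 2) with hA_def
  set B : ℂ := Complex.sinh (m / 2) with hB_def
  have hABC : A ^ 2 - B ^ 2 = 1 := Complex.cosh_sq_sub_sinh_sq (m / 2)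
  -- the key conjugation facts
  have him : (m / 2).im = ϑ := by
    rw [show m / 2 = ((1/2 : ℝ) : ℂ) * m by push_cast; ring, Complex.mul_im]
    simp [Complex.ofReal_re, Complex.ofReal_im, hm]
  have hsub : m / 2 - (starRingEnd ℂ) (m / 2) = ((2 * ϑ : ℝ) : ℂ) * I := by
    rw [Complex.sub_conj, him]
  have h1C : A * (starRingEnd ℂ) A - B * (starRingEnd ℂ) B = 1 - 2 * (s : ℂ) ^ 2 := by
    rw [hA_def, hB_def, ← Complex.cosh_conj, ← Complex.sinh_conj, ← Complex.cosh_sub, hsub,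
      Complex.cosh_mul_I, ← Complex.ofReal_cos]
    have : Real.cos (2 * ϑ) = 1 - 2 * s ^ 2 := by
      rw [Real.cos_two_mul, Real.cos_sq']; ring
    rw [this]; push_cast; ring
  have h2C : B * (starRingEnd ℂ) A - A * (starRingEnd ℂ) B = 2 * (s : ℂ) * (co : ℂ) * I := by
    rw [hA_def, hB_def, ← Complex.cosh_conj, ← Complex.sinh_conj, ← Complex.sinh_sub, hsub,
      Complex.sinh_mul_I, ← Complex.ofReal_sin]
    have : Real.sin (2 * ϑ) = 2 * s * co := by rw [Real.sin_two_mul]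
    rw [this]; push_cast; ring
  have hscC : (s : ℂ) ^ 2 = 1 - (co : ℂ) ^ 2 := by
    have : s ^ 2 = 1 - co ^ 2 := Real.sin_sq ϑ
    exact_mod_cast congrArg (Complex.ofReal) this
  have hTco : ((Real.tan ϑ : ℝ) : ℂ) * (co : ℂ) = (s : ℂ) := by
    have : Real.tan ϑ * co = s := Real.tan_mul_cos hco.ne'
    exact_mod_cast congrArg (Complex.ofReal) this
  have hK : ((Real.tan ϑ : ℝ) : ℂ) ^ 2 * (co : ℂ) ^ 2 = 1 - (co : ℂ) ^ 2 := by
    linear_combination (((Real.tan ϑ : ℝ) : ℂ) * (co : ℂ) + (s : ℂ)) * hTco + hscC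
  -- the Möbius map
  have hcothC : cothC ((c : ℂ) / 2) = (r : ℂ) := by
    rw [cothC, show ((c : ℂ) / 2) = ((c / 2 : ℝ) : ℂ) by push_cast; ring,
      ← Complex.ofReal_cosh, ← Complex.ofReal_sinh, hr_def, cothR]
    norm_cast
  have htanhC : Complex.tanh ((c : ℂ) / 2) = (t : ℂ) := by
    rw [show ((c : ℂ) / 2) = ((c / 2 : ℝ) : ℂ) by push_cast; ring, ← Complex.ofReal_tanh]
  have hmob : ∀ z : ℂ, mobius (Tmat c m * Jmat c) z
      = -(B * z + (r : ℂ) * A) / ((t : ℂ) * A * z + B) := by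
    intro z
    rw [Tmat, Jmat, Matrix.mul_fin_two, mobius]
    simp only [Matrix.of_apply, Matrix.cons_val', Matrix.cons_val_zero, Matrix.cons_val_one, Matrix.head_cons,
      Matrix.empty_val', Matrix.cons_val_fin_one, Matrix.head_fin_const]
    rw [hcothC, htanhC, ← hA_def, ← hB_def]
    congr 1
    · linear_combination (-(B * z) - A) * hrtC + A * hrtC
    · linear_combination B * hrtC
  -- membership characterization
  have memS : ∀ z : ℂ,
      ‖z + Complex.I * ((r : ℂ) * ((Real.tan ϑ : ℝ) : ℂ))‖ = r / co ↔
      (co : ℂ) * (z * (starRingEnd ℂ) z)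
        + I * r * s * ((starRingEnd ℂ) z - z) - co * r ^ 2 = 0 := by
    intro z
    have hconj : (starRingEnd ℂ) (z + Complex.I * ((r : ℂ) * ((Real.tan ϑ : ℝ) : ℂ)))
        = (starRingEnd ℂ) z - Complex.I * ((r : ℂ) * ((Real.tan ϑ : ℝ) : ℂ)) := by
      simp only [map_add, map_mul, Complex.conj_I, Complex.conj_ofReal]
      ring
    constructor
    · intro h
      have hsq : Complex.normSq (z + Complex.I * ((r : ℂ) * ((Real.tan ϑ : ℝ) : ℂ)))
          = (r / co) ^ 2 := by rw [← Complex.sq_norm, h]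
      have hreal : co ^ 2 * Complex.normSq (z + Complex.I * ((r : ℂ) * ((Real.tan ϑ : ℝ) : ℂ)))
          = r ^ 2 := by
        rw [hsq]
        field_simp
      have h2 : (co : ℂ) ^ 2 * ((z + Complex.I * ((r : ℂ) * ((Real.tan ϑ : ℝ) : ℂ)))
          * ((starRingEnd ℂ) z - Complex.I * ((r : ℂ) * ((Real.tan ϑ : ℝ) : ℂ)))) = (r : ℂ) ^ 2 := by
        rw [← hconj, Complex.mul_conj]
        exact_mod_cast congrArg Complex.ofReal hreal
      have key : (co : ℂ) * ((co : ℂ) * (z * (starRingEnd ℂ) z)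
          + I * r * s * ((starRingEnd ℂ) z - z) - co * r ^ 2) = 0 := by
        linear_combination h2
          + (z * (r : ℂ) * (co : ℂ) * I - (starRingEnd ℂ) z * (r : ℂ) * (co : ℂ) * I) * hTco
          + ((r : ℂ) ^ 2 * (co : ℂ) ^ 2 * ((Real.tan ϑ : ℝ) : ℂ) ^ 2) * Complex.I_sq
          - (r : ℂ) ^ 2 * hK
      exact (mul_eq_zero.1 key).resolve_left hcoC
    · intro h
      have step : (co : ℂ) * ((co : ℂ) ^ 2 * ((z + Complex.I * ((r : ℂ) * ((Real.tan ϑ : ℝ) : ℂ)))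
          * ((starRingEnd ℂ) z - Complex.I * ((r : ℂ) * ((Real.tan ϑ : ℝ) : ℂ)))) - (r : ℂ) ^ 2)
          = 0 := by
        linear_combination (co : ℂ) ^ 2 * h
          + ((starRingEnd ℂ) z * (r : ℂ) * (co : ℂ) ^ 2 * I - z * (r : ℂ) * (co : ℂ) ^ 2 * I) * hTco
          - ((r : ℂ) ^ 2 * (co : ℂ) ^ 3 * ((Real.tan ϑ : ℝ) : ℂ) ^ 2) * Complex.I_sq
          + ((r : ℂ) ^ 2 * (co : ℂ)) * hK
      have h2 : (co : ℂ) ^ 2 * ((z + Complex.I * ((r : ℂ) * ((Real.tan ϑ : ℝ) : ℂ)))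
          * (starRingEnd ℂ) (z + Complex.I * ((r : ℂ) * ((Real.tan ϑ : ℝ) : ℂ)))) = (r : ℂ) ^ 2 := by
        rw [hconj]
        exact sub_eq_zero.1 ((mul_eq_zero.1 step).resolve_left hcoC)
      rw [Complex.mul_conj] at h2
      have hreal : co ^ 2 * Complex.normSq (z + Complex.I * ((r : ℂ) * ((Real.tan ϑ : ℝ) : ℂ)))
          = r ^ 2 := by exact_mod_cast h2
      have hsq : Complex.normSq (z + Complex.I * ((r : ℂ) * ((Real.tan ϑ : ℝ) : ℂ)))
          = (r / co) ^ 2 := by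
        rw [div_pow, eq_div_iff (pow_ne_zero 2 hco.ne')]
        linear_combination hreal
      rw [Complex.norm_def, hsq]
      exact Real.sqrt_sq (by positivity)
  -- D never vanishes on the hypercycle
  have hNbar : ∀ z : ℂ, (starRingEnd ℂ) (-(B * z + (r : ℂ) * A))
      = -((starRingEnd ℂ) B * (starRingEnd ℂ) z + (r : ℂ) * (starRingEnd ℂ) A) := by
    intro z; simp [map_add, map_mul, Complex.conj_ofReal]
  have hDbar : ∀ z : ℂ, (starRingEnd ℂ) ((t : ℂ) * A * z + B)
      = (t : ℂ) * (starRingEnd ℂ) A * (starRingEnd ℂ) z + (starRingEnd ℂ) B := by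
    intro z; simp [map_add, map_mul, Complex.conj_ofReal]
  have hDne : ∀ z : ℂ,
      ((co : ℂ) * (z * (starRingEnd ℂ) z)
        + I * r * s * ((starRingEnd ℂ) z - z) - co * r ^ 2 = 0) →
      (t : ℂ) * A * z + B ≠ 0 := by
    intro z hz hD
    have key := core_identity A B ((starRingEnd ℂ) A) ((starRingEnd ℂ) B) (r : ℂ) (t : ℂ)
      (s : ℂ) (co : ℂ) z ((starRingEnd ℂ) z) hrtC h1C h2C hscC
    rw [hz, neg_zero] at key
    have hDc : (t : ℂ) * (starRingEnd ℂ) A * (starRingEnd ℂ) z + (starRingEnd ℂ) B = 0 := by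
      rw [← hDbar, hD, map_zero]
    rw [hD, hDc] at key
    have hNN : (co : ℂ) * (-(B * z + (r : ℂ) * A)
        * -((starRingEnd ℂ) B * (starRingEnd ℂ) z + (r : ℂ) * (starRingEnd ℂ) A)) = 0 := by
      linear_combination key
    have hN : -(B * z + (r : ℂ) * A) = 0 := by
      have h5 := (mul_eq_zero.1 hNN).resolve_left hcoC
      rw [← hNbar z, Complex.mul_conj] at h5
      have h6 : Complex.normSq (-(B * z + (r : ℂ) * A)) = 0 := by exact_mod_cast h5
      exact Complex.normSq_eq_zero.1 h6
    have : (1 : ℂ) = 0 := by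
      linear_combination (-((t : ℂ) * A)) * hN - B * hD - A ^ 2 * hrtC - hABC
    exact one_ne_zero this
  -- forward invariance
  have hfwd : ∀ z : ℂ,
      ((co : ℂ) * (z * (starRingEnd ℂ) z)
        + I * r * s * ((starRingEnd ℂ) z - z) - co * r ^ 2 = 0) →
      ((co : ℂ) * ((mobius (Tmat c m * Jmat c) z) * (starRingEnd ℂ) (mobius (Tmat c m * Jmat c) z))
        + I * r * s * ((starRingEnd ℂ) (mobius (Tmat c m * Jmat c) z) - mobius (Tmat c m * Jmat c) z)
        - co * r ^ 2 = 0) := by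
    intro z hz
    have hD := hDne z hz
    have hDc : (t : ℂ) * (starRingEnd ℂ) A * (starRingEnd ℂ) z + (starRingEnd ℂ) B ≠ 0 := by
      rw [← hDbar z]
      intro h
      exact hD (by simpa using congrArg (starRingEnd ℂ) h)
    have key := core_identity A B ((starRingEnd ℂ) A) ((starRingEnd ℂ) B) (r : ℂ) (t : ℂ)
      (s : ℂ) (co : ℂ) z ((starRingEnd ℂ) z) hrtC h1C h2C hscC
    rw [hz, neg_zero] at key
    rw [hmob z, map_div₀, hNbar z, hDbar z]
    set N : ℂ := -(B * z + (r : ℂ) * A) with hN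
    set D : ℂ := (t : ℂ) * A * z + B with hDdef
    set Nb : ℂ := -((starRingEnd ℂ) B * (starRingEnd ℂ) z + (r : ℂ) * (starRingEnd ℂ) A) with hNb
    set Db : ℂ := (t : ℂ) * (starRingEnd ℂ) A * (starRingEnd ℂ) z + (starRingEnd ℂ) B with hDb
    have hprod : ((co : ℂ) * (N / D * (Nb / Db)) + I * r * s * (Nb / Db - N / D) - co * r ^ 2)
        * (D * Db) = 0 := by
      have expand : ((co : ℂ) * (N / D * (Nb / Db)) + I * r * s * (Nb / Db - N / D) - co * r ^ 2)
          * (D * Db)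
          = co * (N * Nb) + I * r * s * (Nb * D - N * Db) - co * r ^ 2 * (D * Db) := by
        field_simp
      rw [expand]
      linear_combination key
    exact (mul_eq_zero.1 hprod).resolve_right (mul_ne_zero hD hDc)
  -- involution on the hypercycle
  have hinv : ∀ w : ℂ,
      ((co : ℂ) * (w * (starRingEnd ℂ) w)
        + I * r * s * ((starRingEnd ℂ) w - w) - co * r ^ 2 = 0) →
      mobius (Tmat c m * Jmat c) (mobius (Tmat c m * Jmat c) w) = w := by
    intro w hw
    have hDw := hDne w hw
    have hz := hfwd w hw
    have hDz := hDne _ hz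
    rw [hmob w] at hDz
    rw [hmob, hmob w]
    rw [div_eq_iff hDz]
    have hmul : (-(B * w + (r : ℂ) * A) / ((t : ℂ) * A * w + B)) * ((t : ℂ) * A * w + B)
        = -(B * w + (r : ℂ) * A) := div_mul_cancel₀ _ hDw
    linear_combination (-1 : ℂ) * hmul
  -- conclusion
  ext x
  simp only [Set.mem_image, Set.mem_setOf_eq]
  constructor
  · rintro ⟨z, hz, rfl⟩
    exact (memS _).2 (hfwd z ((memS z).1 hz))
  · intro hx
    exact ⟨mobius (Tmat c m * Jmat c) x, (memS _).2 (hfwd x ((memS x).1 hx)),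
      hinv x ((memS x).1 hx)⟩
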